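/- For any T0 space X the following inclusions hold: every closure of a singleton is the closure of a directed set; the closure of any subset that is directed in the specialization order is a Rudin set; every Rudin set is a well-filtered determined (WD) set; and every WD set is an irreducible closed set. That is, S_c(X) ⊆ D_c(X) ⊆ RD(X) ⊆ WD(X) ⊆ Irr_c(X). -/

import Mathlib

open Set Topology

universe u

variable {X : Type u}

/-- Specialization order: `x ≤ y` iff `x ∈ closure {y}`. -/
def specLE [TopologicalSpace X] (x y : X) : Prop := x ∈ closure ({y} : Set X)

/-- Directed subset w.r.t. the specialization order. -/
def dirOn [TopologicalSpace X] (D : Set X) : Prop :=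
  D.Nonempty ∧ ∀ a ∈ D, ∀ b ∈ D, ∃ c ∈ D, specLE a c ∧ specLE b c

/-- Downward closure w.r.t. the specialization order. -/
def dClo [TopologicalSpace X] (A : Set X) : Set X := {x | ∃ a ∈ A, specLE x a}

/-- Upward closure w.r.t. the specialization order. -/
def uClo [TopologicalSpace X] (A : Set X) : Set X := {x | ∃ a ∈ A, specLE a x}

/-- `x` is a supremum of `D` w.r.t. the specialization order. -/
def IsSupOf [TopologicalSpace X] (D : Set X) (x : X) : Prop :=
  (∀ d ∈ D, specLE d x) ∧ ∀ y, (∀ d ∈ D, specLE d y) → specLE x y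

/-- A d-space: a T0 space in which every directed set (for the specialization order)
has a supremum, and every open set is inaccessible by directed suprema. -/
def IsDSpace (X : Type u) [TopologicalSpace X] : Prop :=
  T0Space X ∧ (∀ D : Set X, dirOn D → ∃ x, IsSupOf D x) ∧
    ∀ D : Set X, dirOn D → ∀ x, IsSupOf D x →
      ∀ U : Set X, IsOpen U → x ∈ U → (D ∩ U).Nonempty

/-- A set is saturated if it is the intersection of the open sets containing it. -/
def IsSat [TopologicalSpace X] (A : Set X) : Prop :=
  A = ⋂₀ {U : Set X | IsOpen U ∧ A ⊆ U}

/-- The collection of nonempty compact saturated subsets. -/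
def KSet (X : Type u) [TopologicalSpace X] : Set (Set X) :=
  {K | K.Nonempty ∧ IsCompact K ∧ IsSat K}

/-- A filtered family of sets: nonempty, and every two members contain a common member. -/
def FiltFam [TopologicalSpace X] (𝒦 : Set (Set X)) : Prop :=
  𝒦.Nonempty ∧ ∀ K₁ ∈ 𝒦, ∀ K₂ ∈ 𝒦, ∃ K₃ ∈ 𝒦, K₃ ⊆ K₁ ∧ K₃ ⊆ K₂

/-- Well-filtered space. -/
def IsWF (X : Type u) [TopologicalSpace X] : Prop :=
  T0Space X ∧ ∀ 𝒦 : Set (Set X), 𝒦 ⊆ KSet X → FiltFam 𝒦 →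
    ∀ U : Set X, IsOpen U → ⋂₀ 𝒦 ⊆ U → ∃ K ∈ 𝒦, K ⊆ U

/-- Sober space: every irreducible closed subset is the closure of a unique point. -/
def IsSober (X : Type u) [TopologicalSpace X] : Prop :=
  ∀ A : Set X, IsIrreducible A → IsClosed A → ∃! x : X, A = closure {x}

/-- `V` is way below `U` in the lattice of open sets: every open cover of `U`
has a finite subfamily covering `V`. -/
def wayBelow [TopologicalSpace X] (V U : Set X) : Prop :=
  ∀ 𝒞 : Set (Set X), (∀ W ∈ 𝒞, IsOpen W) → U ⊆ ⋃₀ 𝒞 →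
    ∃ 𝒟 ⊆ 𝒞, 𝒟.Finite ∧ V ⊆ ⋃₀ 𝒟

/-- Core compact space. -/
def CoreCompact (X : Type u) [TopologicalSpace X] : Prop :=
  ∀ (x : X) (U : Set X), IsOpen U → x ∈ U →
    ∃ V : Set X, IsOpen V ∧ x ∈ V ∧ wayBelow V U

/-- The underlying type of the Smyth power space: nonempty compact saturated subsets. -/
abbrev KS (X : Type u) [TopologicalSpace X] : Type u :=
  {K : Set X // K.Nonempty ∧ IsCompact K ∧ IsSat K}

/-- The upper Vietoris topology on `KS X`, generated by the sets
`□U = {K | K ⊆ U}` for `U` open; this makes `KS X` the Smyth power space `P_S(X)`. -/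
instance (X : Type u) [TopologicalSpace X] : TopologicalSpace (KS X) :=
  TopologicalSpace.generateFrom
    {S | ∃ U : Set X, IsOpen U ∧ S = {K : KS X | (K : Set X) ⊆ U}}

/-- Rudin set: a nonempty closed set that is a minimal closed set meeting all
members of some filtered family of nonempty compact saturated sets. -/
def RudinSet [TopologicalSpace X] (A : Set X) : Prop :=
  IsClosed A ∧ A.Nonempty ∧ ∃ 𝒦 : Set (Set X), 𝒦 ⊆ KSet X ∧ FiltFam 𝒦 ∧
    (∀ K ∈ 𝒦, (K ∩ A).Nonempty) ∧
    ∀ B : Set X, IsClosed B → B ⊆ A → (∀ K ∈ 𝒦, (K ∩ B).Nonempty) → B = A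

/-- Well-filtered determined (WD) set. -/
def IsWDSet [TopologicalSpace X] (A : Set X) : Prop :=
  IsClosed A ∧ A.Nonempty ∧ ∀ (Y : Type u) [TopologicalSpace Y], IsWF Y →
    ∀ f : X → Y, Continuous f → ∃ y : Y, closure (f '' A) = closure {y}

/-- Rudin space: every irreducible closed set is a Rudin set. -/
def RudinSpace (X : Type u) [TopologicalSpace X] : Prop :=
  ∀ A : Set X, IsClosed A → IsIrreducible A → RudinSet A

/-- WD space: every irreducible closed set is a WD set. -/
def WDSpace (X : Type u) [TopologicalSpace X] : Prop :=
  ∀ A : Set X, IsClosed A → IsIrreducible A → IsWDSet A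

/-- DC space: every irreducible closed set is the closure of a directed set. -/
def DCSpace (X : Type u) [TopologicalSpace X] : Prop :=
  ∀ A : Set X, IsClosed A → IsIrreducible A → ∃ D : Set X, dirOn D ∧ A = closure D

section Aux

variable {Z : Type*} [TopologicalSpace Z]

lemma specLE_refl' (x : Z) : specLE x x := subset_closure rfl

lemma specLE_trans' {x y z : Z} (h1 : specLE x y) (h2 : specLE y z) : specLE x z := by
  have : closure ({y} : Set Z) ⊆ closure {z} :=
    closure_minimal (Set.singleton_subset_iff.2 h2) isClosed_closure
  exact this h1

lemma mem_open_of_specLE' {U : Set Z} (hU : IsOpen U) {x y : Z} (hx : x ∈ U)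
    (h : specLE x y) : y ∈ U := by
  rcases mem_closure_iff.1 h U hU hx with ⟨z, hzU, hz⟩
  rcases hz with rfl
  exact hzU

/-- Saturation of a set. -/
def satOf (C : Set Z) : Set Z := ⋂₀ {U : Set Z | IsOpen U ∧ C ⊆ U}

lemma subset_satOf (C : Set Z) : C ⊆ satOf C := fun _ hx U hU => hU.2 hx

lemma satOf_subset_iff {C U : Set Z} (hU : IsOpen U) : satOf C ⊆ U ↔ C ⊆ U :=
  ⟨fun h => (subset_satOf C).trans h, fun h => Set.sInter_subset_of_mem ⟨hU, h⟩⟩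

lemma mem_satOf {C : Set Z} {y : Z} : y ∈ satOf C ↔ ∃ c ∈ C, specLE c y := by
  constructor
  · intro h
    by_contra hc
    push_neg at hc
    have hsub : C ⊆ (closure ({y} : Set Z))ᶜ := fun c hcC hmem => hc c hcC hmem
    exact h _ ⟨isClosed_closure.isOpen_compl, hsub⟩ (subset_closure rfl)
  · rintro ⟨c, hcC, hcy⟩ U ⟨hU, hCU⟩
    exact mem_open_of_specLE' hU (hCU hcC) hcy

lemma isSat_satOf (C : Set Z) : IsSat (satOf C) := by
  apply Set.Subset.antisymm
  · intro x hx U hU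
    exact hx U ⟨hU.1, (satOf_subset_iff hU.1).1 hU.2⟩
  · intro x hx U hU
    exact hx U ⟨hU.1, (satOf_subset_iff hU.1).2 hU.2⟩

lemma isCompact_satOf {C : Set Z} (hC : IsCompact C) : IsCompact (satOf C) := by
  apply isCompact_of_finite_subcover
  intro ι U hU hcover
  obtain ⟨t, ht⟩ := hC.elim_finite_subcover U hU ((subset_satOf C).trans hcover)
  exact ⟨t, (satOf_subset_iff (isOpen_biUnion fun i _ => hU i)).2 ht⟩

lemma satOf_mono {C D : Set Z} (h : C ⊆ D) : satOf C ⊆ satOf D :=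
  fun x hx U hU => hx U ⟨hU.1, h.trans hU.2⟩

lemma filtFam_exists_min {Y : Type*} [TopologicalSpace Y] [Finite Y] {𝒦 : Set (Set Y)}
    (h : FiltFam 𝒦) : ∃ K0 ∈ 𝒦, ∀ K ∈ 𝒦, K0 ⊆ K := by
  obtain ⟨K0, hK0, hmin⟩ := Set.Finite.exists_minimalFor id 𝒦 (Set.toFinite 𝒦) h.1
  refine ⟨K0, hK0, fun K hK => ?_⟩
  obtain ⟨K3, hK3, h1, h2⟩ := h.2 K0 hK0 K hK
  have := hmin hK3 h1
  simp only [id] at this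
  exact le_trans this h2

lemma isWF_of_finite {Y : Type*} [TopologicalSpace Y] [Finite Y] [T0Space Y] : IsWF Y := by
  refine ⟨inferInstance, fun 𝒦 _ hfilt U hU hsub => ?_⟩
  obtain ⟨K0, hK0, hmin⟩ := filtFam_exists_min hfilt
  exact ⟨K0, hK0, (Set.subset_sInter fun K hK => hmin K hK).trans hsub⟩

end Aux

/-- `S_c(X) ⊆ D_c(X) ⊆ RD(X) ⊆ WD(X) ⊆ Irr_c(X)` for any T0 space. -/
theorem stmt7 {X : Type u} [TopologicalSpace X] [T0Space X] :
    {A : Set X | ∃ x : X, A = closure {x}} ⊆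
        {A : Set X | ∃ D : Set X, dirOn D ∧ A = closure D} ∧
      {A : Set X | ∃ D : Set X, dirOn D ∧ A = closure D} ⊆ {A : Set X | RudinSet A} ∧
      {A : Set X | RudinSet A} ⊆ {A : Set X | IsWDSet A} ∧
      {A : Set X | IsWDSet A} ⊆ {A : Set X | IsClosed A ∧ IsIrreducible A} := by
  refine ⟨?_, ?_, ?_, ?_⟩
  · -- S_c ⊆ D_c
    rintro A ⟨x, rfl⟩
    exact ⟨{x}, ⟨⟨x, rfl⟩, fun a ha b hb =>
      ⟨x, rfl, by rcases ha with rfl; exact specLE_refl' _,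
        by rcases hb with rfl; exact specLE_refl' _⟩⟩, rfl⟩
  · -- D_c ⊆ RD
    rintro A ⟨D, hD, rfl⟩
    refine ⟨isClosed_closure, hD.1.mono subset_closure,
      (fun d => satOf {d}) '' D, ?_, ?_, ?_, ?_⟩
    · rintro K ⟨d, _, rfl⟩
      exact ⟨⟨d, subset_satOf _ rfl⟩, isCompact_satOf isCompact_singleton, isSat_satOf _⟩
    · refine ⟨hD.1.image _, ?_⟩
      rintro K1 ⟨a, ha, rfl⟩ K2 ⟨b, hb, rfl⟩
      obtain ⟨c, hc, hac, hbc⟩ := hD.2 a ha b hb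
      refine ⟨satOf {c}, ⟨c, hc, rfl⟩, ?_, ?_⟩ <;>
        · intro x hx
          obtain ⟨e, he, hce⟩ := mem_satOf.1 hx
          rcases he with rfl
          exact mem_satOf.2 ⟨_, rfl, specLE_trans' (by assumption) hce⟩
    · rintro K ⟨d, hd, rfl⟩
      exact ⟨d, subset_satOf _ rfl, subset_closure hd⟩
    · intro B hB hBA hmeet
      refine Set.Subset.antisymm hBA (closure_minimal (fun d hd => ?_) hB)
      obtain ⟨x, hxK, hxB⟩ := hmeet _ ⟨d, hd, rfl⟩
      obtain ⟨e, he, hde⟩ := mem_satOf.1 hxK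
      rcases he with rfl
      have : closure ({x} : Set X) ⊆ B := closure_minimal (Set.singleton_subset_iff.2 hxB) hB
      exact this hde
  · -- RD ⊆ WD
    rintro A ⟨hAc, hAne, 𝒦, h𝒦K, hfilt, hmeet, hmin⟩
    refine ⟨hAc, hAne, fun Y _ hWF f hf => ?_⟩
    set 𝒦' : Set (Set Y) := (fun K => satOf (f '' (K ∩ A))) '' 𝒦 with h𝒦'
    have h𝒦'K : 𝒦' ⊆ KSet Y := by
      rintro K' ⟨K, hK, rfl⟩
      obtain ⟨x, hx⟩ := hmeet K hK
      exact ⟨⟨f x, subset_satOf _ ⟨x, hx, rfl⟩⟩,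
        isCompact_satOf ((((h𝒦K hK).2.1).inter_right hAc).image hf),
        isSat_satOf _⟩
    have hfilt' : FiltFam 𝒦' := by
      refine ⟨hfilt.1.image _, ?_⟩
      rintro K1' ⟨K1, hK1, rfl⟩ K2' ⟨K2, hK2, rfl⟩
      obtain ⟨K3, hK3, h1, h2⟩ := hfilt.2 K1 hK1 K2 hK2
      exact ⟨_, ⟨K3, hK3, rfl⟩,
        satOf_mono (Set.image_mono  (Set.inter_subset_inter_left _ h1)),
        satOf_mono (Set.image_mono  (Set.inter_subset_inter_left _ h2))⟩
    have hy : ∃ y, y ∈ ⋂₀ 𝒦' ∧ y ∈ closure (f '' A) := by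
      by_contra hc
      push_neg at hc
      have hsub : ⋂₀ 𝒦' ⊆ (closure (f '' A))ᶜ := fun y hy => hc y hy
      obtain ⟨K', hK'mem, hK'sub⟩ := hWF.2 𝒦' h𝒦'K hfilt' _
        isClosed_closure.isOpen_compl hsub
      obtain ⟨K, hK, rfl⟩ := hK'mem
      obtain ⟨x, hxK, hxA⟩ := hmeet K hK
      exact hK'sub (subset_satOf _ ⟨x, ⟨hxK, hxA⟩, rfl⟩)
        (subset_closure ⟨x, hxA, rfl⟩)
    obtain ⟨y, hy1, hy2⟩ := hy
    refine ⟨y, Set.Subset.antisymm ?_ (closure_minimal (Set.singleton_subset_iff.2 hy2)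
      isClosed_closure)⟩
    have hBA : A ∩ f ⁻¹' (closure {y}) = A := by
      refine hmin _ (hAc.inter (isClosed_closure.preimage hf)) Set.inter_subset_left ?_
      intro K hK
      have := hy1 _ ⟨K, hK, rfl⟩
      obtain ⟨c, ⟨x, hx, rfl⟩, hcy⟩ := mem_satOf.1 this
      exact ⟨x, hx.1, hx.2, hcy⟩
    have : f '' A ⊆ closure {y} := by
      rintro _ ⟨a, ha, rfl⟩
      rw [← hBA] at ha
      exact ha.2
    exact closure_minimal this isClosed_closure
  · -- WD ⊆ Irr_c
    rintro A ⟨hAc, hAne, hWD⟩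
    refine ⟨hAc, hAne, ?_⟩
    intro U V hU hV ⟨x, hxA, hxU⟩ ⟨z, hzA, hzV⟩
    have hopenProp : IsOpen {r : Prop | r} := by
      have : ({True} : Set Prop) = {r : Prop | r} := by
        ext r; simp [eq_iff_iff]
      rw [← this]; exact isOpen_singleton_true
    set f : X → ULift.{u} (Prop × Prop) := fun w => ⟨(w ∈ U, w ∈ V)⟩ with hfdef
    have hfc : Continuous f := by
      apply continuous_uliftUp.comp
      exact Continuous.prodMk (continuous_Prop.2 hU) (continuous_Prop.2 hV)
    obtain ⟨y, hy⟩ := hWD (ULift.{u} (Prop × Prop)) isWF_of_finite f hfc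
    have hS1 : IsOpen {w : ULift.{u} (Prop × Prop) | w.down.1} :=
      hopenProp.preimage (continuous_fst.comp continuous_uliftDown)
    have hS2 : IsOpen {w : ULift.{u} (Prop × Prop) | w.down.2} :=
      hopenProp.preimage (continuous_snd.comp continuous_uliftDown)
    have hfx : f x ∈ closure ({y} : Set (ULift.{u} (Prop × Prop))) := by
      rw [← hy]; exact subset_closure ⟨x, hxA, rfl⟩
    have hfz : f z ∈ closure ({y} : Set (ULift.{u} (Prop × Prop))) := by
      rw [← hy]; exact subset_closure ⟨z, hzA, rfl⟩
    have hp : y.down.1 := by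
      obtain ⟨w, hw1, hw2⟩ := mem_closure_iff.1 hfx _ hS1 hxU
      rcases hw2 with rfl; exact hw1
    have hq : y.down.2 := by
      obtain ⟨w, hw1, hw2⟩ := mem_closure_iff.1 hfz _ hS2 hzV
      rcases hw2 with rfl; exact hw1
    have hyc : y ∈ closure (f '' A) := by
      rw [hy]; exact subset_closure rfl
    obtain ⟨w, hwS, a, ha, rfl⟩ := mem_closure_iff.1 hyc _ (hS1.inter hS2) ⟨hp, hq⟩
    exact ⟨a, ha, hwS.1, hwS.2⟩
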